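/- Restrict the 2-form ω = dτ∧dt + dζ∧dz on T*ℝ^{n+1} to the characteristic variety Σ = {τ = −|ζ|²}, parametrized (away from ζ=0) by (ζ, z_0^⊥, t_0, s̃) via z = z_0^⊥ + 2s̃ ζ/|ζ|, t = t_0 + s̃/|ζ|, where z_0^⊥ ⊥ ζ. Then the restriction equals dt_0 ∧ d|ζ|² − dz_0^⊥ ∧ dζ, independent of s̃. In particular the symplectic reduction of Σ by the Hamilton flow of τ + |ζ|² carries the symplectic form dt_0 ∧ d|ζ|² − dz_0^⊥ ∧ dζ on the parameter space of bicharacteristics. -/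

import Mathlib

open scoped RealInnerProductSpace

noncomputable section

/-- Phase space `T*ℝ^{n+1}` with coordinates `(t, z, τ, ζ)`. -/
abbrev PS (n : ℕ) := ℝ × EuclideanSpace ℝ (Fin n) × ℝ × EuclideanSpace ℝ (Fin n)

/-- The canonical symplectic form `ω = dτ∧dt + ∑ dζ_j∧dz_j`. -/
def Omega {n : ℕ} (u v : PS n) : ℝ :=
  u.2.2.1 * v.1 - v.2.2.1 * u.1 + ⟪u.2.2.2, v.2.1⟫ - ⟪v.2.2.2, u.2.1⟫

/-- The parametrization `(ζ, z₀^⊥, t₀, s̃) ↦ (t₀ + s̃/|ζ|, z₀^⊥ + 2s̃ζ/|ζ|, -|ζ|², ζ)`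
of the characteristic variety `Σ = {τ = -|ζ|²}` away from `ζ = 0`. -/
def PsiS {n : ℕ} (p : EuclideanSpace ℝ (Fin n) × EuclideanSpace ℝ (Fin n) × ℝ × ℝ) : PS n :=
  (p.2.2.1 + p.2.2.2 / ‖p.1‖, p.2.1 + (2 * p.2.2.2 / ‖p.1‖) • p.1, -‖p.1‖ ^ 2, p.1)

/-- the restriction of `ω = dτ∧dt + dζ∧dz` to `Σ = {τ = -|ζ|²}`,
in the bicharacteristic parametrization `(ζ, z₀^⊥, t₀, s̃)` (with `z₀^⊥ ⊥ ζ`), equals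
`dt₀∧d|ζ|² - dz₀^⊥∧dζ`, independently of `s̃`.  Here points `p = (ζ, w, t₀, s̃)` satisfy
`⟪w, ζ⟫ = 0` and tangent vectors `u` the linearized constraint `⟪u_w, ζ⟫ + ⟪w, u_ζ⟫ = 0`. -/
theorem stmt8 (n : ℕ) :
    ∀ p : EuclideanSpace ℝ (Fin n) × EuclideanSpace ℝ (Fin n) × ℝ × ℝ,
      p.1 ≠ 0 → ⟪p.2.1, p.1⟫ = 0 →
      ∀ u v : EuclideanSpace ℝ (Fin n) × EuclideanSpace ℝ (Fin n) × ℝ × ℝ,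
        ⟪u.2.1, p.1⟫ + ⟪p.2.1, u.1⟫ = 0 →
        ⟪v.2.1, p.1⟫ + ⟪p.2.1, v.1⟫ = 0 →
        Omega
            (fderiv ℝ (PsiS : EuclideanSpace ℝ (Fin n) × EuclideanSpace ℝ (Fin n) × ℝ × ℝ →
              PS n) p u)
            (fderiv ℝ (PsiS : EuclideanSpace ℝ (Fin n) × EuclideanSpace ℝ (Fin n) × ℝ × ℝ →
              PS n) p v)
          = u.2.2.1 * (2 * ⟪p.1, v.1⟫) - v.2.2.1 * (2 * ⟪p.1, u.1⟫)
            - (⟪u.2.1, v.1⟫ - ⟪v.2.1, u.1⟫) := by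
  intro p hp _ u v _ _
  have hn : ‖p.1‖ ≠ 0 := norm_ne_zero_iff.mpr hp
  have hns : ‖p.1‖ ^ 2 ≠ 0 := pow_ne_zero _ hn
  set πζ := ContinuousLinearMap.fst ℝ (EuclideanSpace ℝ (Fin n)) (EuclideanSpace ℝ (Fin n) × ℝ × ℝ) with hπζ
  set π2 := ContinuousLinearMap.snd ℝ (EuclideanSpace ℝ (Fin n)) (EuclideanSpace ℝ (Fin n) × ℝ × ℝ) with hπ2
  set πw := (ContinuousLinearMap.fst ℝ (EuclideanSpace ℝ (Fin n)) (ℝ × ℝ)).comp π2 with hπw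
  set π3 := (ContinuousLinearMap.snd ℝ (EuclideanSpace ℝ (Fin n)) (ℝ × ℝ)).comp π2 with hπ3
  set πt := (ContinuousLinearMap.fst ℝ ℝ ℝ).comp π3 with hπt
  set πs := (ContinuousLinearMap.snd ℝ ℝ ℝ).comp π3 with hπs
  have hζ : HasFDerivAt (fun q : (EuclideanSpace ℝ (Fin n) × EuclideanSpace ℝ (Fin n) × ℝ × ℝ) => q.1) πζ p := πζ.hasFDerivAt
  have hw : HasFDerivAt (fun q : (EuclideanSpace ℝ (Fin n) × EuclideanSpace ℝ (Fin n) × ℝ × ℝ) => q.2.1) πw p := πw.hasFDerivAt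
  have ht : HasFDerivAt (fun q : (EuclideanSpace ℝ (Fin n) × EuclideanSpace ℝ (Fin n) × ℝ × ℝ) => q.2.2.1) πt p := πt.hasFDerivAt
  have hs : HasFDerivAt (fun q : (EuclideanSpace ℝ (Fin n) × EuclideanSpace ℝ (Fin n) × ℝ × ℝ) => q.2.2.2) πs p := πs.hasFDerivAt
  have hsq : HasFDerivAt (fun q : (EuclideanSpace ℝ (Fin n) × EuclideanSpace ℝ (Fin n) × ℝ × ℝ) => ‖q.1‖ ^ 2) (2 • (innerSL ℝ p.1).comp πζ) p := hζ.norm_sq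
  have hg : HasDerivAt (fun y : ℝ => (Real.sqrt y)⁻¹)
      (-(1 / (2 * ‖p.1‖)) / ‖p.1‖ ^ 2) (‖p.1‖ ^ 2) := by
    have := (Real.hasDerivAt_sqrt hns).inv (by positivity)
    rwa [Real.sqrt_sq (norm_nonneg p.1)] at this
  have hinv : HasFDerivAt (fun q : (EuclideanSpace ℝ (Fin n) × EuclideanSpace ℝ (Fin n) × ℝ × ℝ) => ‖q.1‖⁻¹)
      ((-(1 / (2 * ‖p.1‖)) / ‖p.1‖ ^ 2) • (2 • (innerSL ℝ p.1).comp πζ)) p := by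
    have h := hg.comp_hasFDerivAt p hsq
    have heq : ((fun y : ℝ => (Real.sqrt y)⁻¹) ∘ (fun q : (EuclideanSpace ℝ (Fin n) × EuclideanSpace ℝ (Fin n) × ℝ × ℝ) => ‖q.1‖ ^ 2))
        = fun q : (EuclideanSpace ℝ (Fin n) × EuclideanSpace ℝ (Fin n) × ℝ × ℝ) => ‖q.1‖⁻¹ := by
      funext q; simp [Function.comp, Real.sqrt_sq (norm_nonneg _)]
    rwa [heq] at h
  have hc1 := ht.add (hs.mul hinv)
  have hc2 := hw.add (((hs.const_mul (2:ℝ)).mul hinv).smul hζ)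
  have hc3 := hsq.neg
  have hL := HasFDerivAt.prodMk hc1 (HasFDerivAt.prodMk hc2 (HasFDerivAt.prodMk hc3 hζ))
  have hPsi : (PsiS : (EuclideanSpace ℝ (Fin n) × EuclideanSpace ℝ (Fin n) × ℝ × ℝ) → PS n) = fun q : (EuclideanSpace ℝ (Fin n) × EuclideanSpace ℝ (Fin n) × ℝ × ℝ) =>
      (q.2.2.1 + q.2.2.2 * ‖q.1‖⁻¹, q.2.1 + (2 * q.2.2.2 * ‖q.1‖⁻¹) • q.1, -‖q.1‖ ^ 2, q.1) := by
    funext q; simp [PsiS, div_eq_mul_inv]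
  rw [hPsi, HasFDerivAt.fderiv (f := fun q : (EuclideanSpace ℝ (Fin n) × EuclideanSpace ℝ (Fin n) × ℝ × ℝ) =>
      (q.2.2.1 + q.2.2.2 * ‖q.1‖⁻¹, q.2.1 + (2 * q.2.2.2 * ‖q.1‖⁻¹) • q.1, -‖q.1‖ ^ 2, q.1)) hL]
  simp only [ContinuousLinearMap.add_apply, ContinuousLinearMap.prod_apply,
    ContinuousLinearMap.comp_apply, ContinuousLinearMap.smul_apply,
    ContinuousLinearMap.smulRight_apply, ContinuousLinearMap.coe_fst',
    ContinuousLinearMap.coe_snd', innerSL_apply_apply, ContinuousLinearMap.neg_apply,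
    smul_eq_mul, Omega, hπζ, hπw, hπt, hπs, hπ3, hπ2, ContinuousLinearMap.coe_comp',
    Function.comp, inner_add_right, real_inner_smul_right, nsmul_eq_mul]
  rw [real_inner_comm u.1 v.2.1, real_inner_comm v.1 u.2.1, real_inner_comm u.1 p.1,
    real_inner_comm v.1 p.1, real_inner_comm v.1 u.1]
  push_cast
  ring
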